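/- Suppose ε ∈ ℤⁿ is real (⟨ε,ε⟩ = 1), e ∈ A_ε is nonzero with the projector factorization property, every nonzero element of A_0 is a unit of A, and the support of the grading is pointed (if A_α ≠ 0 and A_{−α} ≠ 0 then α = 0). Then every nonzero f ∈ A_ε is irreducible in A (f is not a unit, and in any factorization f = g·h one of g, h is a unit). -/

import Mathlib

open DirectSum

noncomputable instance lexLO (n : ℕ) : LinearOrder (Lex (Fin n → ℤ)) :=
  haveI : WellFoundedLT (Fin n) := inferInstance
  Pi.Lex.linearOrder

instance lexLOACG (n : ℕ) : IsOrderedCancelAddMonoid (Lex (Fin n → ℤ)) :=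
  inferInstance

private lemma lex_cancel {n : ℕ} (i j β γ : Fin n → ℤ)
    (h1 : toLex i ≤ toLex β) (h2 : toLex j ≤ toLex γ) (h3 : i + j = β + γ) :
    i = β ∧ j = γ := by
  have hsum : toLex i + toLex j = toLex β + toLex γ := congrArg toLex h3
  have e1 : toLex i = toLex β := by
    rcases h1.lt_or_eq with hlt | heq
    · exfalso
      have : toLex i + toLex j < toLex β + toLex γ := add_lt_add_of_lt_of_le hlt h2
      rw [hsum] at this; exact lt_irrefl _ this
    · exact heq
  have hib : i = β := toLex.injective e1
  subst hib
  exact ⟨rfl, add_left_cancel h3⟩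

private lemma comp_key {n : ℕ} {k A : Type*} [Field k] [CommRing A] [IsDomain A] [Algebra k A]
    (𝒜 : (Fin n → ℤ) → Submodule k A) [GradedAlgebra 𝒜]
    [∀ (i : Fin n → ℤ) (x : 𝒜 i), Decidable (x ≠ 0)]
    (g h : A) (β γ : Fin n → ℤ)
    (hcan : ∀ i ∈ (DirectSum.decompose 𝒜 g).support, ∀ j ∈ (DirectSum.decompose 𝒜 h).support,
        i + j = β + γ → i = β ∧ j = γ) :
    (DirectSum.decompose 𝒜 (g * h) (β + γ) : A)
      = (DirectSum.decompose 𝒜 g β : A) * (DirectSum.decompose 𝒜 h γ : A) := by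
  classical
  rw [DirectSum.decompose_mul, DirectSum.coe_mul_apply]
  have hsub : ((DirectSum.decompose 𝒜 g).support ×ˢ (DirectSum.decompose 𝒜 h).support).filter
      (fun ij : (Fin n → ℤ) × (Fin n → ℤ) => ij.1 + ij.2 = β + γ) ⊆ {(β, γ)} := by
    rintro ⟨i, j⟩ hmem
    simp only [Finset.mem_filter, Finset.mem_product] at hmem
    obtain ⟨⟨hi, hj⟩, hij⟩ := hmem
    obtain ⟨rfl, rfl⟩ := hcan i hi j hj hij
    simp
  rw [Finset.sum_subset hsub]
  · simp
  · rintro ⟨i, j⟩ hmem hnot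
    simp only [Finset.mem_singleton, Prod.mk.injEq] at hmem
    obtain ⟨rfl, rfl⟩ := hmem
    simp only [Finset.mem_filter, Finset.mem_product, not_and, and_true] at hnot
    by_cases hβ : i ∈ (DirectSum.decompose 𝒜 g).support
    · have hγ : j ∉ (DirectSum.decompose 𝒜 h).support := fun hγ => hnot hβ hγ
      rw [DFinsupp.notMem_support_iff.mp hγ]
      simp
    · rw [DFinsupp.notMem_support_iff.mp hβ]
      simp

private lemma aux_homog {n : ℕ} {k A : Type*} [Field k] [CommRing A] [IsDomain A] [Algebra k A]
    (𝒜 : (Fin n → ℤ) → Submodule k A) [GradedAlgebra 𝒜]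
    {g h : A} {ε : Fin n → ℤ} (hg : g ≠ 0) (hh : h ≠ 0) (hgh : g * h ∈ 𝒜 ε) :
    ∃ β γ : Fin n → ℤ, β + γ = ε ∧ g ∈ 𝒜 β ∧ h ∈ 𝒜 γ := by
  classical
  have hne : ∀ x : A, x ≠ 0 → (DirectSum.decompose 𝒜 x).support.Nonempty := by
    intro x hx
    rw [Finset.nonempty_iff_ne_empty]
    intro hs
    apply hx
    have hx' := DirectSum.sum_support_decompose 𝒜 x
    rw [hs] at hx'
    simpa using hx'.symm
  obtain ⟨β, hβmem, hβmax⟩ := Finset.exists_max_image (DirectSum.decompose 𝒜 g).support (toLex : (Fin n → ℤ) → Lex (Fin n → ℤ)) (hne g hg)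
  obtain ⟨γ, hγmem, hγmax⟩ := Finset.exists_max_image (DirectSum.decompose 𝒜 h).support (toLex : (Fin n → ℤ) → Lex (Fin n → ℤ)) (hne h hh)
  obtain ⟨βm, hβmmem, hβmmin⟩ := Finset.exists_min_image (DirectSum.decompose 𝒜 g).support (toLex : (Fin n → ℤ) → Lex (Fin n → ℤ)) (hne g hg)
  obtain ⟨γm, hγmmem, hγmmin⟩ := Finset.exists_min_image (DirectSum.decompose 𝒜 h).support (toLex : (Fin n → ℤ) → Lex (Fin n → ℤ)) (hne h hh)
  have key1 := comp_key 𝒜 g h β γ (fun i hi j hj hij =>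
    lex_cancel i j β γ (hβmax i hi) (hγmax j hj) hij)
  have key2 : (DirectSum.decompose 𝒜 (g * h) (βm + γm) : A)
      = (DirectSum.decompose 𝒜 g βm : A) * (DirectSum.decompose 𝒜 h γm : A) := by
    apply comp_key
    intro i hi j hj hij
    obtain ⟨h1, h2⟩ := lex_cancel βm γm i j (hβmmin i hi) (hγmmin j hj) hij.symm
    exact ⟨h1.symm, h2.symm⟩
  have hgβ : (DirectSum.decompose 𝒜 g β : A) ≠ 0 := by
    intro h0
    exact DFinsupp.mem_support_iff.mp hβmem (Subtype.ext h0)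
  have hhγ : (DirectSum.decompose 𝒜 h γ : A) ≠ 0 := by
    intro h0
    exact DFinsupp.mem_support_iff.mp hγmem (Subtype.ext h0)
  have hgβm : (DirectSum.decompose 𝒜 g βm : A) ≠ 0 := by
    intro h0
    exact DFinsupp.mem_support_iff.mp hβmmem (Subtype.ext h0)
  have hhγm : (DirectSum.decompose 𝒜 h γm : A) ≠ 0 := by
    intro h0
    exact DFinsupp.mem_support_iff.mp hγmmem (Subtype.ext h0)
  have hsum1 : β + γ = ε := by
    by_contra hneq
    rw [DirectSum.decompose_of_mem_ne 𝒜 hgh (Ne.symm hneq)] at key1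
    exact mul_ne_zero hgβ hhγ key1.symm
  have hsum2 : βm + γm = ε := by
    by_contra hneq
    rw [DirectSum.decompose_of_mem_ne 𝒜 hgh (Ne.symm hneq)] at key2
    exact mul_ne_zero hgβm hhγm key2.symm
  have heq : βm = β ∧ γm = γ :=
    lex_cancel βm γm β γ (hβmax βm hβmmem) (hγmax γm hγmmem) (hsum2.trans hsum1.symm)
  obtain ⟨hβeq, hγeq⟩ := heq
  have hsupg : (DirectSum.decompose 𝒜 g).support ⊆ {β} := by
    intro i hi
    have h1 : toLex β ≤ toLex i := hβeq ▸ hβmmin i hi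
    have h2 : toLex i ≤ toLex β := hβmax i hi
    simp [toLex.injective (le_antisymm h2 h1)]
  have hsuph : (DirectSum.decompose 𝒜 h).support ⊆ {γ} := by
    intro i hi
    have h1 : toLex γ ≤ toLex i := hγeq ▸ hγmmin i hi
    have h2 : toLex i ≤ toLex γ := hγmax i hi
    simp [toLex.injective (le_antisymm h2 h1)]
  have memof : ∀ (x : A) (δ : Fin n → ℤ), (DirectSum.decompose 𝒜 x).support ⊆ {δ} → x ∈ 𝒜 δ := by
    intro x δ hsub
    have hx := DirectSum.sum_support_decompose 𝒜 x
    rw [Finset.sum_subset hsub (by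
      intro i _ hnot
      rw [DFinsupp.notMem_support_iff.mp hnot]
      simp)] at hx
    rw [Finset.sum_singleton] at hx
    exact hx ▸ SetLike.coe_mem _
  exact ⟨β, γ, hsum1, memof g β hsupg, memof h γ hsuph⟩

private lemma aux_nonunit {n : ℕ} {k A : Type*} [Field k] [CommRing A] [IsDomain A] [Algebra k A]
    (𝒜 : (Fin n → ℤ) → Submodule k A) [GradedAlgebra 𝒜]
    (bil : (Fin n → ℤ) →ₗ[ℤ] (Fin n → ℤ) →ₗ[ℤ] ℤ)
    {ε : Fin n → ℤ} (hreal : bil ε ε = 1)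
    (hpointed : ∀ α : Fin n → ℤ, 𝒜 α ≠ ⊥ → 𝒜 (-α) ≠ ⊥ → α = 0)
    (x : A) (hx : x ∈ 𝒜 ε) (hx0 : x ≠ 0) : ¬ IsUnit x := by
  intro hu
  obtain ⟨y, hy⟩ := hu.exists_right_inv
  have hy0 : y ≠ 0 := by
    intro h0; rw [h0, mul_zero] at hy; exact one_ne_zero hy.symm
  have h1 : x * y ∈ 𝒜 (0 : Fin n → ℤ) := by
    rw [hy]; exact SetLike.GradedOne.one_mem
  obtain ⟨β, γ, hsum, hxβ, hyγ⟩ := aux_homog 𝒜 hx0 hy0 h1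
  have hβε : ε = β := DirectSum.degree_eq_of_mem_mem 𝒜 hx hxβ hx0
  have hγeq : γ = -ε := by
    rw [← hβε] at hsum
    exact (neg_eq_of_add_eq_zero_right hsum).symm
  have hε0 : ε = 0 := by
    apply hpointed
    · rw [Submodule.ne_bot_iff]; exact ⟨x, hx, hx0⟩
    · rw [Submodule.ne_bot_iff]; exact ⟨y, hγeq ▸ hyγ, hy0⟩
  rw [hε0] at hreal
  simp at hreal

theorem stmt2 {n : ℕ} {k A : Type*} [Field k] [CommRing A] [IsDomain A] [Algebra k A]
    (𝒜 : (Fin n → ℤ) → Submodule k A) [GradedAlgebra 𝒜]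
    (bil : (Fin n → ℤ) →ₗ[ℤ] (Fin n → ℤ) →ₗ[ℤ] ℤ)
    (ε : Fin n → ℤ) (hreal : bil ε ε = 1)
    (e : A) (he0 : e ≠ 0) (he : e ∈ 𝒜 ε)
    (hproj : ∀ (α : Fin n → ℤ), 0 < bil ε α → ∀ f ∈ 𝒜 α,
        ∃ f' ∈ 𝒜 (α - bil ε α • ε), f = e ^ (bil ε α).toNat * f')
    (hunit : ∀ a ∈ 𝒜 (0 : Fin n → ℤ), a ≠ 0 → IsUnit a)
    (hpointed : ∀ α : Fin n → ℤ, 𝒜 α ≠ ⊥ → 𝒜 (-α) ≠ ⊥ → α = 0) :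
    ∀ f ∈ 𝒜 ε, f ≠ 0 → Irreducible f := by
  intro f hf hf0
  constructor
  · exact aux_nonunit 𝒜 bil hreal hpointed f hf hf0
  · intro g h hfgh
    have hg0 : g ≠ 0 := by rintro rfl; rw [zero_mul] at hfgh; exact hf0 hfgh
    have hh0 : h ≠ 0 := by rintro rfl; rw [mul_zero] at hfgh; exact hf0 hfgh
    have hghε : g * h ∈ 𝒜 ε := hfgh ▸ hf
    obtain ⟨β, γ, hsum, hgβ, hhγ⟩ := aux_homog 𝒜 hg0 hh0 hghε
    have hbc : bil ε β + bil ε γ = 1 := by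
      rw [← map_add, hsum, hreal]
    -- factor f = e * f₀ with f₀ a unit
    obtain ⟨f₀, hf₀mem, hf₀⟩ := hproj ε (by rw [hreal]; norm_num) f hf
    rw [hreal] at hf₀
    simp only [Int.toNat_one, pow_one] at hf₀
    have hf₀mem' : f₀ ∈ 𝒜 (0 : Fin n → ℤ) := by
      have : ε - bil ε ε • ε = 0 := by rw [hreal]; simp
      rwa [this] at hf₀mem
    have hf₀0 : f₀ ≠ 0 := by
      rintro rfl; rw [mul_zero] at hf₀; exact hf0 hf₀
    have hf₀u : IsUnit f₀ := hunit f₀ hf₀mem' hf₀0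
    rcases le_or_gt (bil ε β) 0 with hble | hbpos
    · -- bil ε γ ≥ 1 > 0, so g is a unit
      have hcpos : 0 < bil ε γ := by omega
      obtain ⟨h', _, hh'⟩ := hproj γ hcpos h hhγ
      set ct := (bil ε γ).toNat with hct
      have hct1 : 1 ≤ ct := by omega
      have hkey : e * f₀ = e * (e ^ (ct - 1) * h' * g) := by
        rw [← hf₀, hfgh, hh']
        have hpow : e ^ ct = e * e ^ (ct - 1) := by
          rw [← pow_succ']; congr 1; omega
        rw [hpow]; ring
      have hcancel : f₀ = e ^ (ct - 1) * h' * g := mul_left_cancel₀ he0 hkey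
      left
      exact isUnit_of_mul_isUnit_right (hcancel ▸ hf₀u)
    · -- bil ε β ≥ 1, so h is a unit
      obtain ⟨g', _, hg'⟩ := hproj β hbpos g hgβ
      set bt := (bil ε β).toNat with hbt
      have hbt1 : 1 ≤ bt := by omega
      have hkey : e * f₀ = e * (e ^ (bt - 1) * g' * h) := by
        rw [← hf₀, hfgh, hg']
        have hpow : e ^ bt = e * e ^ (bt - 1) := by
          rw [← pow_succ']; congr 1; omega
        rw [hpow]; ring
      have hcancel : f₀ = e ^ (bt - 1) * g' * h := mul_left_cancel₀ he0 hkey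
      right
      exact isUnit_of_mul_isUnit_right (hcancel ▸ hf₀u)
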